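/- Let Ω ⊆ ℝ^d be measurable, ε > 0, k > 0, and let v : ℝ^d → ℝ be given. Suppose u₁ and u₂ are differentiable functions with integrable J_Q-integrands, |u₁| ≤ 1 and |u₂| ≤ 1 a.e. on Ω, and both minimize J_Q(·;v) over K (i.e. J_Q(u_i;v) ≤ J_Q(w;v) for every differentiable w with |w| ≤ 1 a.e. on Ω and integrable integrand, for i = 1,2; in particular J_Q((u₁+u₂)/2; v) ≥ J_Q(u_i;v)). Then u₁ = u₂ almost everywhere on Ω. -/

import Mathlib

open MeasureTheory

/-- linearization of the double-well factor `p(s) = (1/2)(s²−1)` at `t`. -/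
noncomputable def pL (s t : ℝ) : ℝ := t * s - (1/2) * t^2 - 1/2

/-- integrand of the double-well energy `E`. -/
noncomputable def Eint {d : ℕ} (ε : ℝ) (u : EuclideanSpace ℝ (Fin d) → ℝ)
    (x : EuclideanSpace ℝ (Fin d)) : ℝ :=
  (1/2) * ‖gradient u x‖^2 + (1/ε^2) * ((1/4) * (u x ^ 2 - 1)^2)

/-- the double-well energy `E(u) = ∫_Ω (1/2)|∇u|² + (1/ε²)F(u)`. -/
noncomputable def E {d : ℕ} (Ω : Set (EuclideanSpace ℝ (Fin d))) (ε : ℝ)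
    (u : EuclideanSpace ℝ (Fin d) → ℝ) : ℝ :=
  ∫ x in Ω, Eint ε u x

/-- integrand of the quadratic approximate energy `E_Q(·;v)`. -/
noncomputable def EQint {d : ℕ} (ε : ℝ) (u v : EuclideanSpace ℝ (Fin d) → ℝ)
    (x : EuclideanSpace ℝ (Fin d)) : ℝ :=
  (1/2) * ‖gradient u x‖^2 + (1/ε^2) * (pL (u x) (v x))^2

/-- the quadratic approximate energy `E_Q(u;v)`. -/
noncomputable def EQ {d : ℕ} (Ω : Set (EuclideanSpace ℝ (Fin d))) (ε : ℝ)
    (u v : EuclideanSpace ℝ (Fin d) → ℝ) : ℝ :=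
  ∫ x in Ω, EQint ε u v x

/-- integrand of the time-discrete quadratic functional `J_Q(·;v)` with time step `k`. -/
noncomputable def JQint {d : ℕ} (ε k : ℝ) (u v : EuclideanSpace ℝ (Fin d) → ℝ)
    (x : EuclideanSpace ℝ (Fin d)) : ℝ :=
  (1/2) * ‖gradient u x‖^2 + (1/(2*k)) * (u x - v x)^2 + (1/ε^2) * (pL (u x) (v x))^2

/-- the time-discrete quadratic functional `J_Q(u;v)`. -/
noncomputable def JQ {d : ℕ} (Ω : Set (EuclideanSpace ℝ (Fin d))) (ε k : ℝ)
    (u v : EuclideanSpace ℝ (Fin d) → ℝ) : ℝ :=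
  ∫ x in Ω, JQint ε k u v x

open InnerProductSpace in
lemma gradient_mid {d : ℕ} (u₁ u₂ : EuclideanSpace ℝ (Fin d) → ℝ)
    (h₁ : Differentiable ℝ u₁) (h₂ : Differentiable ℝ u₂) (x : EuclideanSpace ℝ (Fin d)) :
    HasGradientAt (fun y => (u₁ y + u₂ y) / 2)
      ((1/2 : ℝ) • (gradient u₁ x + gradient u₂ x)) x := by
  have G₁ := (h₁ x).hasGradientAt
  have G₂ := (h₂ x).hasGradientAt
  have F₁ := (hasGradientAt_iff_hasFDerivAt.mp G₁)
  have F₂ := (hasGradientAt_iff_hasFDerivAt.mp G₂)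
  have F : HasFDerivAt (fun y => (u₁ y + u₂ y) / 2)
      ((1/2 : ℝ) • (toDual ℝ _ (gradient u₁ x) + toDual ℝ _ (gradient u₂ x))) x := by
    have := ((F₁.add F₂).const_smul (1/2 : ℝ))
    have e : (fun y => (u₁ y + u₂ y) / 2) = (1/2 : ℝ) • (u₁ + u₂) := by
      funext y; simp [smul_eq_mul]; ring
    rw [e]; exact this
  rw [hasGradientAt_iff_hasFDerivAt]
  have e : toDual ℝ _ ((1/2 : ℝ) • (gradient u₁ x + gradient u₂ x))
      = (1/2 : ℝ) • (toDual ℝ _ (gradient u₁ x) + toDual ℝ _ (gradient u₂ x)) := by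
    simp [_root_.map_add, _root_.map_smul]
  rw [e]; exact F

lemma JQ_key {d : ℕ} (ε k : ℝ) (hk : 0 < k) (v u₁ u₂ : EuclideanSpace ℝ (Fin d) → ℝ)
    (h₁ : Differentiable ℝ u₁) (h₂ : Differentiable ℝ u₂) (x : EuclideanSpace ℝ (Fin d)) :
    JQint ε k (fun y => (u₁ y + u₂ y) / 2) v x + (1/(8*k)) * (u₁ x - u₂ x)^2
      ≤ (JQint ε k u₁ v x + JQint ε k u₂ v x) / 2 := by
  have hg : gradient (fun y => (u₁ y + u₂ y) / 2) x
      = (1/2 : ℝ) • (gradient u₁ x + gradient u₂ x) :=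
    (gradient_mid u₁ u₂ h₁ h₂ x).gradient
  set g₁ := gradient u₁ x
  set g₂ := gradient u₂ x
  have hnorm : ‖gradient (fun y => (u₁ y + u₂ y) / 2) x‖ ≤ (‖g₁‖ + ‖g₂‖) / 2 := by
    rw [hg, norm_smul]
    have := norm_add_le g₁ g₂
    simp only [Real.norm_eq_abs]
    rw [abs_of_nonneg (by norm_num : (0:ℝ) ≤ (1/2:ℝ))]
    linarith
  have hsq : ‖gradient (fun y => (u₁ y + u₂ y) / 2) x‖^2 ≤ (‖g₁‖^2 + ‖g₂‖^2) / 2 := by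
    have h0 := norm_nonneg (gradient (fun y => (u₁ y + u₂ y) / 2) x)
    nlinarith [sq_nonneg (‖g₁‖ - ‖g₂‖), norm_nonneg g₁, norm_nonneg g₂]
  simp only [JQint, pL]
  have hkinv : 0 < 1/(2*k) := by positivity
  have hε2 : (0:ℝ) ≤ 1/ε^2 := by positivity
  have key1 : (1/(2*k)) * ((u₁ x + u₂ x)/2 - v x)^2 + (1/(8*k)) * (u₁ x - u₂ x)^2
      = ((1/(2*k)) * (u₁ x - v x)^2 + (1/(2*k)) * (u₂ x - v x)^2) / 2 := by
    field_simp
    ring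
  have key2 : (v x * ((u₁ x + u₂ x)/2) - (1/2) * (v x)^2 - 1/2)^2
      ≤ ((v x * u₁ x - (1/2) * (v x)^2 - 1/2)^2 + (v x * u₂ x - (1/2) * (v x)^2 - 1/2)^2) / 2 := by
    nlinarith [sq_nonneg (v x * u₁ x - v x * u₂ x)]
  nlinarith [mul_le_mul_of_nonneg_left key2 hε2]

theorem JQ_minimizer_unique {d : ℕ} (Ω : Set (EuclideanSpace ℝ (Fin d)))
    (hΩ : MeasurableSet Ω) (ε k : ℝ) (hε : 0 < ε) (hk : 0 < k)
    (v u₁ u₂ : EuclideanSpace ℝ (Fin d) → ℝ)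
    (hu₁ : Differentiable ℝ u₁) (hu₂ : Differentiable ℝ u₂)
    (hJQ₁ : IntegrableOn (JQint ε k u₁ v) Ω) (hJQ₂ : IntegrableOn (JQint ε k u₂ v) Ω)
    (hb₁ : ∀ᵐ x ∂(volume.restrict Ω), |u₁ x| ≤ 1)
    (hb₂ : ∀ᵐ x ∂(volume.restrict Ω), |u₂ x| ≤ 1)
    (hmin₁ : ∀ w : EuclideanSpace ℝ (Fin d) → ℝ, Differentiable ℝ w →
      (∀ᵐ x ∂(volume.restrict Ω), |w x| ≤ 1) → IntegrableOn (JQint ε k w v) Ω →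
      JQ Ω ε k u₁ v ≤ JQ Ω ε k w v)
    (hmin₂ : ∀ w : EuclideanSpace ℝ (Fin d) → ℝ, Differentiable ℝ w →
      (∀ᵐ x ∂(volume.restrict Ω), |w x| ≤ 1) → IntegrableOn (JQint ε k w v) Ω →
      JQ Ω ε k u₂ v ≤ JQ Ω ε k w v)
    (hmid : IntegrableOn (JQint ε k (fun x => (u₁ x + u₂ x) / 2) v) Ω) :
    ∀ᵐ x ∂(volume.restrict Ω), u₁ x = u₂ x := by
  set w : EuclideanSpace ℝ (Fin d) → ℝ := fun x => (u₁ x + u₂ x) / 2 with hw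
  have hwdiff : Differentiable ℝ w := by
    intro x
    simp only [hw, div_eq_mul_inv]
    exact ((hu₁ x).add (hu₂ x)).mul_const _
  have hwb : ∀ᵐ x ∂(volume.restrict Ω), |w x| ≤ 1 := by
    filter_upwards [hb₁, hb₂] with x h1 h2
    have := abs_add_le (u₁ x) (u₂ x)
    simp only [hw, abs_div, abs_two]
    rw [div_le_one (by norm_num)]
    linarith
  have h1 : JQ Ω ε k u₁ v ≤ JQ Ω ε k w v := hmin₁ w hwdiff hwb hmid
  have h2 : JQ Ω ε k u₂ v ≤ JQ Ω ε k w v := hmin₂ w hwdiff hwb hmid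
  set D : EuclideanSpace ℝ (Fin d) → ℝ :=
    fun x => (JQint ε k u₁ v x + JQint ε k u₂ v x) / 2 - JQint ε k w v x with hD
  have hsum : IntegrableOn (fun x => (JQint ε k u₁ v x + JQint ε k u₂ v x) / 2) Ω :=
    (hJQ₁.add hJQ₂).div_const 2
  have hDint : IntegrableOn D Ω := hsum.sub hmid
  have hDnonneg : ∀ x, 0 ≤ D x := by
    intro x
    have := JQ_key ε k hk v u₁ u₂ hu₁ hu₂ x
    have hq : 0 ≤ (1/(8*k)) * (u₁ x - u₂ x)^2 := by positivity
    simp only [hD]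
    linarith
  have hint : ∫ x in Ω, D x = (JQ Ω ε k u₁ v + JQ Ω ε k u₂ v) / 2 - JQ Ω ε k w v := by
    simp only [hD]
    rw [integral_sub hsum hmid]
    congr 1
    rw [integral_div, integral_add hJQ₁ hJQ₂]
    rfl
  have hle : ∫ x in Ω, D x ≤ 0 := by rw [hint]; linarith
  have hzero : ∫ x in Ω, D x = 0 :=
    le_antisymm hle (integral_nonneg hDnonneg)
  have hDae : ∀ᵐ x ∂(volume.restrict Ω), D x = 0 := by
    have := (integral_eq_zero_iff_of_nonneg_ae
      (Filter.Eventually.of_forall hDnonneg) hDint).mp hzero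
    filter_upwards [this] with x hx
    exact hx
  filter_upwards [hDae] with x hx
  have hkey := JQ_key ε k hk v u₁ u₂ hu₁ hu₂ x
  have hq : (1/(8*k)) * (u₁ x - u₂ x)^2 ≤ D x := by simp only [hD]; linarith
  rw [hx] at hq
  have hsq : (u₁ x - u₂ x)^2 ≤ 0 := by
    by_contra h
    push_neg at h
    have : 0 < (1/(8*k)) * (u₁ x - u₂ x)^2 := by positivity
    linarith
  have h0 : (u₁ x - u₂ x)^2 = 0 := le_antisymm hsq (sq_nonneg _)
  have := pow_eq_zero_iff (n := 2) (by norm_num) |>.mp h0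
  linarith
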